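/- Royden's lemma (general case): Let V be a complex inner product space and let S be a symmetric bihermitian form on V. Suppose there is a real constant K such that S(ζ,ζ,ζ,ζ) ≤ K‖ζ‖⁴ for every ζ ∈ V. Then for any finite family ζ₁,…,ζ_ν of pairwise orthogonal vectors in V, one has Σ_{α,β=1}^{ν} S(ζ_α, ζ_α, ζ_β, ζ_β) ≤ (K/2)·[ (Σ_{α=1}^{ν} ‖ζ_α‖²)² + Σ_{α=1}^{ν} ‖ζ_α‖⁴ ]. -/

import Mathlib

open Complex Finset

noncomputable def roydenCh (k : ZMod 4) : ℂ := Complex.I ^ k.val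

lemma zmod4_cases (k : ZMod 4) : k = 0 ∨ k = 1 ∨ k = 2 ∨ k = 3 := by
  revert k; decide

lemma roydenCh_zero : roydenCh 0 = 1 := by simp [roydenCh]
lemma roydenCh_one : roydenCh 1 = Complex.I := by
  rw [show roydenCh 1 = Complex.I ^ (1:ZMod 4).val from rfl,
    show ZMod.val (1:ZMod 4) = 1 from rfl, pow_one]
lemma roydenCh_two : roydenCh 2 = -1 := by
  rw [show roydenCh 2 = Complex.I ^ (2:ZMod 4).val from rfl,
    show ZMod.val (2:ZMod 4) = 2 from rfl]; simp [pow_succ]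
lemma roydenCh_three : roydenCh 3 = -Complex.I := by
  rw [show roydenCh 3 = Complex.I ^ (3:ZMod 4).val from rfl,
    show ZMod.val (3:ZMod 4) = 3 from rfl]; simp [pow_succ]

lemma roydenCh_add (j k : ZMod 4) : roydenCh (j + k) = roydenCh j * roydenCh k := by
  rcases zmod4_cases j with h | h | h | h <;> subst h <;>
    rcases zmod4_cases k with h | h | h | h <;> subst h <;>
    simp only [show (0+0 : ZMod 4) = 0 by decide, show (0+1 : ZMod 4) = 1 by decide,
      show (0+2 : ZMod 4) = 2 by decide, show (0+3 : ZMod 4) = 3 by decide,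
      show (1+0 : ZMod 4) = 1 by decide, show (1+1 : ZMod 4) = 2 by decide,
      show (1+2 : ZMod 4) = 3 by decide, show (1+3 : ZMod 4) = 0 by decide,
      show (2+0 : ZMod 4) = 2 by decide, show (2+1 : ZMod 4) = 3 by decide,
      show (2+2 : ZMod 4) = 0 by decide, show (2+3 : ZMod 4) = 1 by decide,
      show (3+0 : ZMod 4) = 3 by decide, show (3+1 : ZMod 4) = 0 by decide,
      show (3+2 : ZMod 4) = 1 by decide, show (3+3 : ZMod 4) = 2 by decide,
      roydenCh_zero, roydenCh_one, roydenCh_two, roydenCh_three] <;>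
    ring_nf <;> simp [Complex.I_sq]

lemma roydenCh_conj (k : ZMod 4) : (starRingEnd ℂ) (roydenCh k) = roydenCh (-k) := by
  rcases zmod4_cases k with h | h | h | h <;> subst h <;>
    simp only [show (-0 : ZMod 4) = 0 by decide, show (-1 : ZMod 4) = 3 by decide,
      show (-2 : ZMod 4) = 2 by decide, show (-3 : ZMod 4) = 1 by decide,
      roydenCh_zero, roydenCh_one, roydenCh_two, roydenCh_three] <;>
    simp

lemma zmod4_univ : (univ : Finset (ZMod 4)) = {0, 1, 2, 3} := by decide

lemma roydenCh_sum_mul (m : ZMod 4) :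
    (∑ k : ZMod 4, roydenCh (m * k)) = if m = 0 then 4 else 0 := by
  rw [zmod4_univ, Finset.sum_insert (by decide), Finset.sum_insert (by decide),
    Finset.sum_insert (by decide), Finset.sum_singleton]
  rcases zmod4_cases m with h | h | h | h <;> subst h <;>
    simp only [show (0*0 : ZMod 4) = 0 by decide, show (0*1 : ZMod 4) = 0 by decide,
      show (0*2 : ZMod 4) = 0 by decide, show (0*3 : ZMod 4) = 0 by decide,
      show (1*0 : ZMod 4) = 0 by decide, show (1*1 : ZMod 4) = 1 by decide,
      show (1*2 : ZMod 4) = 2 by decide, show (1*3 : ZMod 4) = 3 by decide,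
      show (2*0 : ZMod 4) = 0 by decide, show (2*1 : ZMod 4) = 2 by decide,
      show (2*2 : ZMod 4) = 0 by decide, show (2*3 : ZMod 4) = 2 by decide,
      show (3*0 : ZMod 4) = 0 by decide, show (3*1 : ZMod 4) = 3 by decide,
      show (3*2 : ZMod 4) = 2 by decide, show (3*3 : ZMod 4) = 1 by decide,
      roydenCh_zero, roydenCh_one, roydenCh_two, roydenCh_three] <;>
    first
      | (rw [if_pos trivial]; norm_num)
      | (rw [if_neg (by decide)]; ring)

/-- **Royden's lemma (general case).**
Let `V` be a complex inner product space and `S` a symmetric bihermitian form on `V`,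
i.e. `S` is `ℂ`-linear in the first and third arguments, conjugate-linear in the
second and fourth arguments, satisfies `S ζ η σ ω = S σ η ζ ω` and
`S η ζ ω σ = conj (S ζ η σ ω)`.  If `S(ζ,ζ,ζ,ζ) ≤ K ‖ζ‖⁴` for all `ζ`, then for any
finite family of pairwise orthogonal vectors `ζ₁, …, ζ_ν` one has
`∑_{α,β} S(ζ_α, ζ_α, ζ_β, ζ_β) ≤ (K/2) ((∑_α ‖ζ_α‖²)² + ∑_α ‖ζ_α‖⁴)`. -/
theorem royden_lemma_general
    {V : Type*} [NormedAddCommGroup V] [InnerProductSpace ℂ V]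
    (S : V → V → V → V → ℂ) (K : ℝ)
    (hlin1 : ∀ η σ ω, IsLinearMap ℂ fun ζ => S ζ η σ ω)
    (hlin3 : ∀ ζ η ω, IsLinearMap ℂ fun σ => S ζ η σ ω)
    (hadd2 : ∀ ζ σ ω η₁ η₂, S ζ (η₁ + η₂) σ ω = S ζ η₁ σ ω + S ζ η₂ σ ω)
    (hsmul2 : ∀ ζ σ ω (c : ℂ) η, S ζ (c • η) σ ω = starRingEnd ℂ c * S ζ η σ ω)
    (hadd4 : ∀ ζ η σ ω₁ ω₂, S ζ η σ (ω₁ + ω₂) = S ζ η σ ω₁ + S ζ η σ ω₂)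
    (hsmul4 : ∀ ζ η σ (c : ℂ) ω, S ζ η σ (c • ω) = starRingEnd ℂ c * S ζ η σ ω)
    (hsym : ∀ ζ η σ ω, S ζ η σ ω = S σ η ζ ω)
    (hherm : ∀ ζ η σ ω, S η ζ ω σ = starRingEnd ℂ (S ζ η σ ω))
    (hbound : ∀ ζ : V, (S ζ ζ ζ ζ).re ≤ K * ‖ζ‖ ^ 4)
    (ν : ℕ) (ζ : Fin ν → V)
    (horth : ∀ α β, α ≠ β → (inner ℂ (ζ α) (ζ β) : ℂ) = 0) :
    (∑ α, ∑ β, S (ζ α) (ζ α) (ζ β) (ζ β)).re ≤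
      K / 2 * ((∑ α, ‖ζ α‖ ^ 2) ^ 2 + ∑ α, ‖ζ α‖ ^ 4) := by
  classical
  have conj_mul : ∀ k : ZMod 4, (starRingEnd ℂ) (roydenCh k) * roydenCh k = 1 := by
    intro k
    rw [roydenCh_conj, ← roydenCh_add, neg_add_cancel, roydenCh_zero]
  -- expansion lemmas
  have e1 : ∀ (g : Fin ν → V) (η σ ω : V), S (∑ a, g a) η σ ω = ∑ a, S (g a) η σ ω :=
    fun g η σ ω => map_sum (IsLinearMap.mk' _ (hlin1 η σ ω)) g univ
  have s1 : ∀ (c : ℂ) (x η σ ω : V), S (c • x) η σ ω = c * S x η σ ω := by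
    intro c x η σ ω
    rw [(hlin1 η σ ω).map_smul, smul_eq_mul]
  have e3 : ∀ (x y ω : V) (g : Fin ν → V), S x y (∑ a, g a) ω = ∑ a, S x y (g a) ω :=
    fun x y ω g => map_sum (IsLinearMap.mk' _ (hlin3 x y ω)) g univ
  have s3 : ∀ (c : ℂ) (x y z ω : V), S x y (c • z) ω = c * S x y z ω := by
    intro c x y z ω
    rw [(hlin3 x y ω).map_smul, smul_eq_mul]
  have e2 : ∀ (x σ ω : V) (g : Fin ν → V), S x (∑ a, g a) σ ω = ∑ a, S x (g a) σ ω :=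
    fun x σ ω g => map_sum (AddMonoidHom.mk' (fun η => S x η σ ω) (hadd2 x σ ω)) g univ
  have e4 : ∀ (x y z : V) (g : Fin ν → V), S x y z (∑ a, g a) = ∑ a, S x y z (g a) :=
    fun x y z g => map_sum (AddMonoidHom.mk' (fun ω => S x y z ω) (hadd4 x y z)) g univ
  -- key symmetry : S u v v u = S u u v v
  have key1 : ∀ u v : V, S u v v u = S u u v v := by
    intro u v
    have h1 : S u v v u = starRingEnd ℂ (S v u u v) := hherm v u u v
    have h2 : S v u u v = S u u v v := hsym v u u v
    have h3 : S u u v v = starRingEnd ℂ (S u u v v) := hherm u u v v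
    rw [h1, h2, ← h3]
  -- full multilinear expansion
  have expand : ∀ u : Fin ν → ℂ,
      S (∑ a, u a • ζ a) (∑ a, u a • ζ a) (∑ a, u a • ζ a) (∑ a, u a • ζ a)
        = ∑ a, ∑ b, ∑ c, ∑ d,
            (u a * starRingEnd ℂ (u b) * (u c * starRingEnd ℂ (u d)))
              * S (ζ a) (ζ b) (ζ c) (ζ d) := by
    intro u
    simp_rw [e1, s1, e2, hsmul2, e3, s3, e4, hsmul4, Finset.mul_sum]
    refine Finset.sum_congr rfl fun a _ => Finset.sum_congr rfl fun b _ =>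
      Finset.sum_congr rfl fun c _ => Finset.sum_congr rfl fun d _ => by ring
  -- norm of the randomized vector
  have hnorm2 : ∀ f : Fin ν → ZMod 4,
      ‖∑ a, roydenCh (f a) • ζ a‖ ^ 2 = ∑ a, ‖ζ a‖ ^ 2 := by
    intro f
    have hv : (inner ℂ (∑ a, roydenCh (f a) • ζ a) (∑ a, roydenCh (f a) • ζ a) : ℂ)
        = ∑ a, ((‖ζ a‖ : ℂ)) ^ 2 := by
      rw [sum_inner]
      refine Finset.sum_congr rfl fun a _ => ?_
      rw [inner_sum, Finset.sum_eq_single a]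
      · rw [inner_smul_left, inner_smul_right, inner_self_eq_norm_sq_to_K,
          ← mul_assoc, conj_mul, one_mul]
        norm_cast
      · intro b _ hb
        rw [inner_smul_left, inner_smul_right, horth a b (Ne.symm hb), mul_zero, mul_zero]
      · intro hans
        exact absurd (Finset.mem_univ a) hans
    rw [← inner_self_eq_norm_sq (𝕜 := ℂ), hv, RCLike.re_to_complex, Complex.re_sum]
    refine Finset.sum_congr rfl fun a _ => ?_
    rw [← Complex.ofReal_pow, Complex.ofReal_re]
  -- the character-sum coefficient
  have coef : ∀ a b c d : Fin ν,
      (∑ f : Fin ν → ZMod 4,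
          roydenCh (f a) * starRingEnd ℂ (roydenCh (f b)) *
            (roydenCh (f c) * starRingEnd ℂ (roydenCh (f d))))
        = if (a = b ∧ c = d) ∨ (a = d ∧ c = b) then (4:ℂ)^ν else 0 := by
    intro a b c d
    have hch_sum : ∀ (g : Fin ν → ZMod 4) (s : Finset (Fin ν)),
        roydenCh (∑ x ∈ s, g x) = ∏ x ∈ s, roydenCh (g x) := by
      intro g s
      induction s using Finset.induction_on with
      | empty => simp [roydenCh_zero]
      | insert _ _ h ih => rw [Finset.sum_insert h, Finset.prod_insert h, roydenCh_add, ih]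
    set m : Fin ν → ZMod 4 := fun x =>
      (if x = a then 1 else 0) + (if x = c then 1 else 0)
        - (if x = b then 1 else 0) - (if x = d then 1 else 0) with hm
    have hsummand : ∀ f : Fin ν → ZMod 4,
        roydenCh (f a) * starRingEnd ℂ (roydenCh (f b)) *
            (roydenCh (f c) * starRingEnd ℂ (roydenCh (f d)))
          = ∏ x, roydenCh (m x * f x) := by
      intro f
      have hsum : (∑ x, m x * f x) = f a + -f b + (f c + -f d) := by
        simp only [hm]
        simp only [sub_mul, add_mul, ite_mul, one_mul, zero_mul]
        rw [Finset.sum_sub_distrib, Finset.sum_sub_distrib, Finset.sum_add_distrib]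
        simp only [Finset.sum_ite_eq', Finset.mem_univ, if_true]
        ring
      rw [← hch_sum, hsum, roydenCh_conj, roydenCh_conj, ← roydenCh_add,
        ← roydenCh_add, ← roydenCh_add]
    simp_rw [hsummand]
    rw [show (∑ f : Fin ν → ZMod 4, ∏ x, roydenCh (m x * f x))
        = ∏ x, ∑ k : ZMod 4, roydenCh (m x * k) by
      rw [← Fintype.piFinset_univ]
      exact Finset.sum_prod_piFinset univ fun x k => roydenCh (m x * k)]
    simp_rw [roydenCh_sum_mul]
    have hiff : (∀ x, m x = 0) ↔ ((a = b ∧ c = d) ∨ (a = d ∧ c = b)) := by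
      constructor
      · intro h
        by_cases hab : a = b
        · by_cases hcd : c = d
          · exact Or.inl ⟨hab, hcd⟩
          · exfalso
            have hc := h c
            subst hab
            simp only [hm, if_true] at hc
            rw [if_neg hcd] at hc
            by_cases hca : c = a
            · rw [if_pos hca] at hc
              exact absurd hc (by decide)
            · rw [if_neg hca] at hc
              exact absurd hc (by decide)
        · by_cases had : a = d
          · by_cases hcb : c = b
            · exact Or.inr ⟨had, hcb⟩
            · exfalso
              have hb := h b
              subst had
              simp only [hm, if_true] at hb
              rw [if_neg (fun hh : b = a => hab hh.symm),
                if_neg (fun hh : b = c => hcb hh.symm)] at hb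
              exact absurd hb (by decide)
          · exfalso
            have ha := h a
            simp only [hm, if_true] at ha
            rw [if_neg hab, if_neg had] at ha
            by_cases hac : a = c
            · rw [if_pos hac] at ha
              exact absurd ha (by decide)
            · rw [if_neg hac] at ha
              exact absurd ha (by decide)
      · rintro (⟨h1, h2⟩ | ⟨h1, h2⟩) x <;> subst h1 <;> subst h2 <;>
          simp only [hm] <;> ring
    by_cases hP : (a = b ∧ c = d) ∨ (a = d ∧ c = b)
    · rw [if_pos hP]
      have hz := hiff.mpr hP
      calc (∏ x : Fin ν, if m x = 0 then (4:ℂ) else 0) = ∏ _x : Fin ν, (4:ℂ) :=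
            Finset.prod_congr rfl fun x _ => if_pos (hz x)
        _ = 4 ^ ν := by rw [Finset.prod_const, card_univ, Fintype.card_fin]
    · rw [if_neg hP]
      obtain ⟨x, hx⟩ : ∃ x, m x ≠ 0 := by
        by_contra hcon
        push_neg at hcon
        exact hP (hiff.mp hcon)
      exact Finset.prod_eq_zero (Finset.mem_univ x) (if_neg hx)
  -- the main averaging identity
  have main : (∑ f : Fin ν → ZMod 4,
        S (∑ a, roydenCh (f a) • ζ a) (∑ a, roydenCh (f a) • ζ a)
          (∑ a, roydenCh (f a) • ζ a) (∑ a, roydenCh (f a) • ζ a))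
      = (4:ℂ)^ν * (2 * (∑ a, ∑ b, S (ζ a) (ζ a) (ζ b) (ζ b))
          - ∑ a, S (ζ a) (ζ a) (ζ a) (ζ a)) := by
    have swap : ∀ (F : (Fin ν → ZMod 4) → Fin ν → Fin ν → Fin ν → Fin ν → ℂ),
        (∑ f : Fin ν → ZMod 4, ∑ a, ∑ b, ∑ c, ∑ d, F f a b c d)
          = ∑ a, ∑ b, ∑ c, ∑ d, ∑ f : Fin ν → ZMod 4, F f a b c d := by
      intro F
      rw [Finset.sum_comm]
      refine Finset.sum_congr rfl fun a _ => ?_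
      rw [Finset.sum_comm]
      refine Finset.sum_congr rfl fun b _ => ?_
      rw [Finset.sum_comm]
      refine Finset.sum_congr rfl fun c _ => ?_
      rw [Finset.sum_comm]
    simp_rw [expand]
    rw [swap]
    have pointwise : ∀ a b c d : Fin ν,
        (∑ f : Fin ν → ZMod 4,
            (roydenCh (f a) * starRingEnd ℂ (roydenCh (f b)) *
              (roydenCh (f c) * starRingEnd ℂ (roydenCh (f d))))
              * S (ζ a) (ζ b) (ζ c) (ζ d))
          = (4:ℂ)^ν * ((if a = b ∧ c = d then S (ζ a) (ζ b) (ζ c) (ζ d) else 0)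
              + (if a = d ∧ c = b then S (ζ a) (ζ b) (ζ c) (ζ d) else 0)
              - (if (a = b ∧ c = d) ∧ (a = d ∧ c = b) then S (ζ a) (ζ b) (ζ c) (ζ d) else 0)) := by
      intro a b c d
      rw [← Finset.sum_mul, coef]
      by_cases hp : a = b ∧ c = d <;> by_cases hq : a = d ∧ c = b <;>
        simp [hp, hq]
    simp_rw [pointwise, ← Finset.mul_sum]
    congr 1
    have sum1 : (∑ a, ∑ b, ∑ c, ∑ d,
        if a = b ∧ c = d then S (ζ a) (ζ b) (ζ c) (ζ d) else 0)
        = ∑ a, ∑ b, S (ζ a) (ζ a) (ζ b) (ζ b) := by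
      simp only [ite_and, Finset.sum_ite_irrel, Finset.sum_ite_eq, Finset.sum_ite_eq',
        Finset.sum_const_zero, Finset.mem_univ, if_true]
    have sum2 : (∑ a, ∑ b, ∑ c, ∑ d,
        if a = d ∧ c = b then S (ζ a) (ζ b) (ζ c) (ζ d) else 0)
        = ∑ a, ∑ b, S (ζ a) (ζ a) (ζ b) (ζ b) := by
      simp only [ite_and, Finset.sum_ite_irrel, Finset.sum_ite_eq, Finset.sum_ite_eq',
        Finset.sum_const_zero, Finset.mem_univ, if_true]
      exact Finset.sum_congr rfl fun a _ => Finset.sum_congr rfl fun b _ => key1 (ζ a) (ζ b)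
    have sum3 : (∑ a, ∑ b, ∑ c, ∑ d,
        if (a = b ∧ c = d) ∧ (a = d ∧ c = b) then S (ζ a) (ζ b) (ζ c) (ζ d) else 0)
        = ∑ a, S (ζ a) (ζ a) (ζ a) (ζ a) := by
      simp only [ite_and, Finset.sum_ite_irrel, Finset.sum_ite_eq, Finset.sum_ite_eq',
        Finset.sum_const_zero, Finset.mem_univ, if_true]
    simp_rw [Finset.sum_sub_distrib, Finset.sum_add_distrib]
    rw [sum1, sum2, sum3]
    ring
  -- conclusion
  have hcard : Fintype.card (Fin ν → ZMod 4) = 4 ^ ν := by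
    simp [Fintype.card_fun]
  have hterm : ∀ f : Fin ν → ZMod 4,
      (S (∑ a, roydenCh (f a) • ζ a) (∑ a, roydenCh (f a) • ζ a)
        (∑ a, roydenCh (f a) • ζ a) (∑ a, roydenCh (f a) • ζ a)).re
        ≤ K * (∑ a, ‖ζ a‖ ^ 2) ^ 2 := by
    intro f
    refine le_trans (hbound _) (le_of_eq ?_)
    rw [show ∀ r : ℝ, r ^ 4 = (r ^ 2) ^ 2 from fun r => by ring, hnorm2 f]
  have hsum_le : (∑ f : Fin ν → ZMod 4,
      (S (∑ a, roydenCh (f a) • ζ a) (∑ a, roydenCh (f a) • ζ a)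
        (∑ a, roydenCh (f a) • ζ a) (∑ a, roydenCh (f a) • ζ a)).re)
      ≤ (4:ℝ) ^ ν * (K * (∑ a, ‖ζ a‖ ^ 2) ^ 2) := by
    refine le_trans (Finset.sum_le_sum fun f _ => hterm f) (le_of_eq ?_)
    rw [Finset.sum_const, Finset.card_univ, hcard, nsmul_eq_mul]
    push_cast
    ring
  have hre := congrArg Complex.re main
  rw [Complex.re_sum] at hre
  rw [show ((4:ℂ))^ν = (((4:ℝ)^ν : ℝ) : ℂ) by push_cast; ring,
    Complex.re_ofReal_mul] at hre
  simp only [Complex.sub_re, Complex.mul_re, Complex.re_ofNat, Complex.im_ofNat,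
    zero_mul, sub_zero, Complex.re_sum] at hre
  rw [hre] at hsum_le
  have hpos : (0:ℝ) < 4 ^ ν := by positivity
  have h2 : 2 * (∑ a, ∑ b, (S (ζ a) (ζ a) (ζ b) (ζ b)).re)
      - (∑ a, (S (ζ a) (ζ a) (ζ a) (ζ a)).re) ≤ K * (∑ a, ‖ζ a‖ ^ 2) ^ 2 :=
    (mul_le_mul_iff_right₀ hpos).mp hsum_le
  have h3 : (∑ a, (S (ζ a) (ζ a) (ζ a) (ζ a)).re) ≤ K * ∑ a, ‖ζ a‖ ^ 4 := by
    rw [Finset.mul_sum]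
    exact Finset.sum_le_sum fun a _ => hbound (ζ a)
  simp only [Complex.re_sum]
  linarith
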